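/- There exists a unique ρ₀ ∈ (1,∞) such that (p−ε)·ρ₀^{Δ_H} + (q+ε)·ρ₀^{−Δ_T} = 1. -/

import Mathlib

open Real Set

/-- There exists a unique `ρ₀ ∈ (1,∞)` with `(p−ε)·ρ₀^{Δ_H} + (q+ε)·ρ₀^{−Δ_T} = 1`. -/
theorem existsUnique_root_notheavy
    (ε p : ℝ) (hε : ε ∈ Set.Ioo (0:ℝ) (1/2)) (hp : p ∈ Set.Ioo ε (1 - ε))
    (q ΔH ΔT : ℝ) (hq : q = 1 - p)
    (hΔH : ΔH = Real.log ((p + ε) / (p - ε)))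
    (hΔT : ΔT = Real.log ((q + ε) / (q - ε))) :
    ∃! ρ₀ : ℝ, ρ₀ ∈ Set.Ioi (1:ℝ) ∧
      (p - ε) * ρ₀ ^ ΔH + (q + ε) * ρ₀ ^ (-ΔT) = 1 := by
  obtain ⟨hε0, hε2⟩ := hε
  obtain ⟨hpε, hp1ε⟩ := hp
  set a : ℝ := p - ε with ha_def
  set b : ℝ := q + ε with hb_def
  have ha : 0 < a := by simp only [ha_def, sub_pos]; exact hpε
  have hb : 0 < b := by simp [hb_def, hq]; linarith
  have hab : a + b = 1 := by rw [ha_def, hb_def, hq]; ring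
  have ha' : 0 < p + ε := by linarith
  have hb' : 0 < q - ε := by simp [hq]; linarith
  have hΔH0 : 0 < ΔH := by
    rw [hΔH]
    apply Real.log_pos
    rw [lt_div_iff₀ ha]
    linarith
  have hΔT0 : 0 < ΔT := by
    rw [hΔT]
    apply Real.log_pos
    rw [lt_div_iff₀ hb']
    simp [hb_def]; linarith
  -- the substituted function f t = a e^{ΔH t} + b e^{-ΔT t}
  set f : ℝ → ℝ := fun t => a * Real.exp (ΔH * t) + b * Real.exp (-ΔT * t) with hf_def
  have hf0 : f 0 = 1 := by simp [hf_def, hab]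
  -- drift negative : a * ΔH < b * ΔT
  have hdrift : a * ΔH - b * ΔT < 0 := by
    have hx : (p + ε) / a ∈ Set.Ioi (0:ℝ) := by
      exact div_pos ha' ha
    have hy : (q - ε) / b ∈ Set.Ioi (0:ℝ) := by
      exact div_pos hb' hb
    have hxy : (p + ε) / a ≠ (q - ε) / b := by
      have h1 : 1 < (p + ε) / a := by rw [lt_div_iff₀ ha]; simp [ha_def]; linarith
      have h2 : (q - ε) / b < 1 := by rw [div_lt_one hb]; simp [hb_def]; linarith
      linarith
    have hJ := strictConcaveOn_log_Ioi.2 hx hy hxy ha hb hab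
    have hsum : a • ((p + ε) / a) + b • ((q - ε) / b) = 1 := by
      have e1 : a * ((p + ε) / a) = p + ε := by field_simp
      have e2 : b * ((q - ε) / b) = q - ε := by field_simp
      rw [smul_eq_mul, smul_eq_mul, e1, e2]
      rw [hq]; ring
    rw [hsum, Real.log_one] at hJ
    have hlx : Real.log ((p + ε) / a) = ΔH := by rw [hΔH]
    have hly : Real.log ((q - ε) / b) = -ΔT := by
      rw [hΔT, ← Real.log_inv]
      congr 1
      rw [inv_div]
    rw [hlx, hly] at hJ
    simp only [smul_eq_mul] at hJ
    linarith
  -- derivative of f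
  have hder : ∀ t : ℝ, HasDerivAt f (a * ΔH * Real.exp (ΔH * t) - b * ΔT * Real.exp (-ΔT * t)) t := by
    intro t
    have h1 : HasDerivAt (fun t : ℝ => Real.exp (ΔH * t)) (Real.exp (ΔH * t) * ΔH) t := by
      simpa using ((hasDerivAt_id t).const_mul ΔH).exp
    have h2 : HasDerivAt (fun t : ℝ => Real.exp (-ΔT * t)) (Real.exp (-ΔT * t) * -ΔT) t := by
      simpa using ((hasDerivAt_id t).const_mul (-ΔT)).exp
    have := (h1.const_mul a).add (h2.const_mul b)
    convert this using 1
    all_goals first | rfl | ring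
  have hderiv : deriv f = fun t => a * ΔH * Real.exp (ΔH * t) - b * ΔT * Real.exp (-ΔT * t) := by
    funext t; exact (hder t).deriv
  -- f is strictly convex
  have hfc : Continuous f := by
    apply Continuous.add
    · exact continuous_const.mul (Real.continuous_exp.comp (continuous_const.mul continuous_id))
    · exact continuous_const.mul (Real.continuous_exp.comp (continuous_const.mul continuous_id))
  have hconv : StrictConvexOn ℝ Set.univ f := by
    apply StrictMono.strictConvexOn_univ_of_deriv hfc
    rw [hderiv]
    intro x y hxy
    have e1 : Real.exp (ΔH * x) < Real.exp (ΔH * y) :=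
      Real.exp_lt_exp.2 (by nlinarith)
    have e2 : Real.exp (-ΔT * y) < Real.exp (-ΔT * x) :=
      Real.exp_lt_exp.2 (by nlinarith)
    have m1 := mul_lt_mul_of_pos_left e1 (mul_pos ha hΔH0)
    have m2 := mul_lt_mul_of_pos_left e2 (mul_pos hb hΔT0)
    dsimp only
    linarith
  -- existence of t₀ > 0 with f t₀ < 1
  have hsmall : ∃ t₀ : ℝ, 0 < t₀ ∧ f t₀ < 1 := by
    have h0 := hder 0
    rw [hasDerivAt_iff_tendsto_slope] at h0
    have hd0 : a * ΔH * Real.exp (ΔH * 0) - b * ΔT * Real.exp (-ΔT * 0) < 0 := by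
      simp; linarith
    have hneg : ∀ᶠ t in nhdsWithin 0 {(0:ℝ)}ᶜ, slope f 0 t < 0 :=
      h0.eventually (Iio_mem_nhds hd0)
    have hmono : nhdsWithin (0:ℝ) (Set.Ioi 0) ≤ nhdsWithin 0 {(0:ℝ)}ᶜ :=
      nhdsWithin_mono 0 (fun x hx => ne_of_gt hx)
    have hneg' : ∀ᶠ t in nhdsWithin (0:ℝ) (Set.Ioi 0), slope f 0 t < 0 := hneg.filter_mono hmono
    have hpos : ∀ᶠ t in nhdsWithin (0:ℝ) (Set.Ioi 0), (0:ℝ) < t := self_mem_nhdsWithin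
    obtain ⟨t₀, hsl, ht₀⟩ := (hneg'.and hpos).exists
    refine ⟨t₀, ht₀, ?_⟩
    rw [slope_def_field] at hsl
    have : (f t₀ - f 0) / (t₀ - 0) < 0 := hsl
    rw [hf0] at this
    have := (div_neg_iff.1 this)
    rcases this with ⟨h1, h2⟩ | ⟨h1, h2⟩
    · linarith
    · linarith
  obtain ⟨t₀, ht₀, hft₀⟩ := hsmall
  -- f is eventually large
  set T : ℝ := max (t₀ + 1) ((Real.log (1 / a)) / ΔH + 1) with hT_def
  have hTt₀ : t₀ < T := lt_of_lt_of_le (by linarith) (le_max_left _ _)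
  have hfT : 1 < f T := by
    have h1 : Real.log (1 / a) / ΔH + 1 ≤ T := le_max_right _ _
    have h2 : Real.log (1 / a) < ΔH * T := by
      rw [← div_lt_iff₀' hΔH0]
      linarith
    have h3 : 1 / a < Real.exp (ΔH * T) := by
      calc 1 / a = Real.exp (Real.log (1 / a)) := (Real.exp_log (by positivity)).symm
        _ < Real.exp (ΔH * T) := Real.exp_lt_exp.2 h2
    have h4 : 1 < a * Real.exp (ΔH * T) := by
      rw [div_lt_iff₀ ha] at h3; linarith [h3]
    have h5 : 0 < b * Real.exp (-ΔT * T) := mul_pos hb (Real.exp_pos _)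
    simp only [hf_def]
    linarith
  -- IVT on [t₀, T]
  have hIVT : ∃ t₁ ∈ Set.Ioc t₀ T, f t₁ = 1 := by
    have hc : ContinuousOn f (Set.Icc t₀ T) := hfc.continuousOn
    have := intermediate_value_Ioc (le_of_lt hTt₀) hc
    have h1 : (1:ℝ) ∈ Set.Ioc (f t₀) (f T) := ⟨hft₀, le_of_lt hfT⟩
    obtain ⟨t₁, ht₁, hft₁⟩ := this h1
    exact ⟨t₁, ht₁, hft₁⟩
  obtain ⟨t₁, ht₁, hft₁⟩ := hIVT
  have ht₁0 : 0 < t₁ := lt_trans ht₀ ht₁.1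
  -- no two distinct positive roots
  have key : ∀ s u : ℝ, 0 < s → s < u → f s = 1 → f u = 1 → False := by
    intro s u hs hsu hfs hfu
    have hu : 0 < u := lt_trans hs hsu
    set lam : ℝ := s / u with hlam_def
    have hlam0 : 0 < lam := div_pos hs hu
    have hlam1 : lam < 1 := (div_lt_one hu).2 hsu
    have h := hconv.2 (Set.mem_univ (0:ℝ)) (Set.mem_univ u) (by linarith : (0:ℝ) ≠ u)
      (by linarith : (0:ℝ) < 1 - lam) hlam0 (by ring)
    have hcomb : (1 - lam) • (0:ℝ) + lam • u = s := by
      simp [hlam_def]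
      field_simp
    rw [hcomb, hfs, hf0, hfu] at h
    simp only [smul_eq_mul, mul_one] at h
    linarith
  -- transfer to ρ
  have hrpow : ∀ ρ : ℝ, 1 < ρ → a * ρ ^ ΔH + b * ρ ^ (-ΔT) = f (Real.log ρ) := by
    intro ρ hρ
    have hρ0 : 0 < ρ := by linarith
    rw [hf_def]
    rw [Real.rpow_def_of_pos hρ0, Real.rpow_def_of_pos hρ0]
    ring_nf
  have hexp1 : 1 < Real.exp t₁ := by
    rw [← Real.exp_zero]; exact Real.exp_lt_exp.2 ht₁0
  refine ⟨Real.exp t₁, ⟨hexp1, ?_⟩, ?_⟩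
  · have h := hrpow (Real.exp t₁) hexp1
    rw [Real.log_exp] at h
    rw [h]; exact hft₁
  · rintro ρ ⟨hρ, hρeq⟩
    have hρ1 : 1 < ρ := hρ
    have hlogρ : 0 < Real.log ρ := Real.log_pos hρ1
    have h := hrpow ρ hρ1
    rw [hρeq] at h
    have hroot : f (Real.log ρ) = 1 := h.symm
    have : Real.log ρ = t₁ := by
      rcases lt_trichotomy (Real.log ρ) t₁ with hlt | heq | hgt
      · exact absurd (key _ _ hlogρ hlt hroot hft₁) (fun h => h)
      · exact heq
      · exact absurd (key _ _ ht₁0 hgt hft₁ hroot) (fun h => h)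
    rw [← this, Real.exp_log (by linarith : (0:ℝ) < ρ)]
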